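/- Let X₁,…,X_r be i.i.d. Bin(n,p) with 0 < p < 1, Z = min_i X_i, and 0 ≤ b ≤ p. Then P(Z > b·n) ≤ exp(-r · 2^{-n·KL(b‖p) - 4·log₂(n+1) - max(0, log₂(p/(1-p)))}). -/

import Mathlib

set_option maxHeartbeats 1000000

open MeasureTheory ProbabilityTheory

/-- Binary KL divergence in bits: KL(a‖p) (conventions 0·log 0 = 0 hold since Real.log 0 = 0). -/
noncomputable def klB (a p : ℝ) : ℝ :=
  a * Real.logb 2 (a / p) + (1 - a) * Real.logb 2 ((1 - a) / (1 - p))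

/-- P(Bin(n,p) = k). -/
noncomputable def binPMF (n k : ℕ) (p : ℝ) : ℝ :=
  (n.choose k : ℝ) * p ^ k * (1 - p) ^ (n - k)

noncomputable def klN (a p : ℝ) : ℝ :=
  a * Real.log (a / p) + (1 - a) * Real.log ((1 - a) / (1 - p))

lemma sum_binPMF (n : ℕ) (a : ℝ) : ∑ j ∈ Finset.range (n+1), binPMF n j a = 1 := by
  have h := add_pow a (1 - a) n
  simp only [add_sub_cancel, one_pow] at h
  rw [h]
  exact Finset.sum_congr rfl fun j _ => by unfold binPMF; ring

lemma binPMF_succ_mul (n j : ℕ) (hj : j < n) (a : ℝ) :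
    binPMF n (j+1) a * ((j:ℝ)+1)
      = (n.choose j : ℝ) * ((n:ℝ) - j) * (a^(j+1) * (1-a)^(n-(j+1))) := by
  have h := Nat.choose_succ_right_eq n j
  have h' : ((n.choose (j+1) : ℕ) : ℝ) * ((j:ℝ)+1) = (n.choose j : ℝ) * ((n:ℝ) - j) := by
    have : ((n.choose (j+1) * (j+1) : ℕ) : ℝ) = ((n.choose j * (n - j) : ℕ) : ℝ) := by
      rw [h]
    push_cast [Nat.cast_sub hj.le] at this
    linarith
  unfold binPMF
  calc (n.choose (j+1) : ℝ) * a ^ (j+1) * (1-a) ^ (n-(j+1)) * ((j:ℝ)+1)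
      = ((n.choose (j+1) : ℝ) * ((j:ℝ)+1)) * (a^(j+1) * (1-a)^(n-(j+1))) := by ring
    _ = (n.choose j : ℝ) * ((n:ℝ) - j) * (a^(j+1) * (1-a)^(n-(j+1))) := by rw [h']

lemma one_sub_nat_div (n k : ℕ) (hn : 0 < n) : 1 - (k:ℝ)/n = ((n:ℝ) - k)/n := by
  have : (n:ℝ) ≠ 0 := by positivity
  field_simp

lemma t_step_up (n k j : ℕ) (hjk : j + 1 ≤ k) (hkn : k ≤ n) :
    binPMF n j ((k:ℝ)/n) ≤ binPMF n (j+1) ((k:ℝ)/n) := by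
  have hn : 0 < n := lt_of_lt_of_le (Nat.lt_of_lt_of_le (Nat.zero_lt_succ j) hjk) hkn
  have hnR : (0:ℝ) < n := by exact_mod_cast hn
  set a : ℝ := (k:ℝ)/n with ha
  have hjn : j < n := lt_of_lt_of_le hjk hkn
  have ha0 : 0 ≤ a := by positivity
  have hknR : (k:ℝ) ≤ n := by exact_mod_cast hkn
  have hjkR : (j:ℝ) + 1 ≤ k := by exact_mod_cast hjk
  have ha1' : 0 ≤ 1 - a := by
    rw [one_sub_nat_div n k hn]
    exact div_nonneg (by linarith) hnR.le
  have hkey : ((j:ℝ)+1) * (1 - a) ≤ ((n:ℝ) - j) * a := by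
    rw [one_sub_nat_div n k hn, ha, ← mul_div_assoc, ← mul_div_assoc,
      div_le_div_iff_of_pos_right hnR]
    nlinarith
  have hmul : binPMF n j a * ((j:ℝ)+1) ≤ binPMF n (j+1) a * ((j:ℝ)+1) := by
    rw [binPMF_succ_mul n j hjn a]
    have hexp : n - j = (n - (j+1)) + 1 := by omega
    have e1 : binPMF n j a * ((j:ℝ)+1)
        = (n.choose j : ℝ) * a^j * (1-a)^(n-(j+1)) * (((j:ℝ)+1) * (1-a)) := by
      unfold binPMF; rw [hexp, pow_succ]; ring
    have e2 : (n.choose j : ℝ) * ((n:ℝ) - j) * (a^(j+1) * (1-a)^(n-(j+1)))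
        = (n.choose j : ℝ) * a^j * (1-a)^(n-(j+1)) * (((n:ℝ) - j) * a) := by
      rw [pow_succ]; ring
    rw [e1, e2]
    apply mul_le_mul_of_nonneg_left hkey
    positivity
  exact le_of_mul_le_mul_right hmul (by positivity)

lemma t_step_down (n k j : ℕ) (hjk : k ≤ j) (hjn : j < n) :
    binPMF n (j+1) ((k:ℝ)/n) ≤ binPMF n j ((k:ℝ)/n) := by
  have hn : 0 < n := by omega
  have hnR : (0:ℝ) < n := by exact_mod_cast hn
  set a : ℝ := (k:ℝ)/n with ha
  have ha0 : 0 ≤ a := by positivity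
  have hknR : (k:ℝ) ≤ n := by exact_mod_cast (le_of_lt (lt_of_le_of_lt hjk hjn))
  have hjkR : (k:ℝ) ≤ j := by exact_mod_cast hjk
  have hjnR : (j:ℝ) < n := by exact_mod_cast hjn
  have ha1' : 0 ≤ 1 - a := by
    rw [one_sub_nat_div n k hn]
    exact div_nonneg (by linarith) hnR.le
  have hkey : ((n:ℝ) - j) * a ≤ ((j:ℝ)+1) * (1 - a) := by
    rw [one_sub_nat_div n k hn, ha, ← mul_div_assoc, ← mul_div_assoc,
      div_le_div_iff_of_pos_right hnR]
    nlinarith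
  have hmul : binPMF n (j+1) a * ((j:ℝ)+1) ≤ binPMF n j a * ((j:ℝ)+1) := by
    rw [binPMF_succ_mul n j hjn a]
    have hexp : n - j = (n - (j+1)) + 1 := by omega
    have e1 : binPMF n j a * ((j:ℝ)+1)
        = (n.choose j : ℝ) * a^j * (1-a)^(n-(j+1)) * (((j:ℝ)+1) * (1-a)) := by
      unfold binPMF; rw [hexp, pow_succ]; ring
    have e2 : (n.choose j : ℝ) * ((n:ℝ) - j) * (a^(j+1) * (1-a)^(n-(j+1)))
        = (n.choose j : ℝ) * a^j * (1-a)^(n-(j+1)) * (((n:ℝ) - j) * a) := by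
      rw [pow_succ]; ring
    rw [e1, e2]
    apply mul_le_mul_of_nonneg_left hkey
    positivity
  exact le_of_mul_le_mul_right hmul (by positivity)

lemma t_le_max (n k : ℕ) (hkn : k ≤ n) :
    ∀ j, j ≤ n → binPMF n j ((k:ℝ)/n) ≤ binPMF n k ((k:ℝ)/n) := by
  have up : ∀ m, ∀ j, j + m = k → binPMF n j ((k:ℝ)/n) ≤ binPMF n k ((k:ℝ)/n) := by
    intro m
    induction m with
    | zero => intro j hj; have hjk : j = k := by omega
              subst hjk; exact le_refl _
    | succ m ih =>
      intro j hj
      calc binPMF n j ((k:ℝ)/n) ≤ binPMF n (j+1) ((k:ℝ)/n) :=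
            t_step_up n k j (by omega) hkn
        _ ≤ binPMF n k ((k:ℝ)/n) := ih (j+1) (by omega)
  have down : ∀ j, k ≤ j → j ≤ n → binPMF n j ((k:ℝ)/n) ≤ binPMF n k ((k:ℝ)/n) := by
    intro j
    induction j with
    | zero => intro h1 _; have : k = 0 := by omega
              subst this; exact le_refl _
    | succ j ih =>
      intro h1 h2
      rcases Nat.eq_or_lt_of_le h1 with h | h
      · rw [← h]
      · calc binPMF n (j+1) ((k:ℝ)/n) ≤ binPMF n j ((k:ℝ)/n) :=
              t_step_down n k j (by omega) (by omega)
          _ ≤ binPMF n k ((k:ℝ)/n) := ih (by omega) (by omega)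
  intro j hj
  rcases le_or_gt j k with h | h
  · exact up (k - j) j (by omega)
  · exact down j h.le hj

lemma one_le_max_term (n k : ℕ) (hkn : k ≤ n) :
    1 ≤ ((n:ℝ)+1) * binPMF n k ((k:ℝ)/n) := by
  calc (1:ℝ) = ∑ j ∈ Finset.range (n+1), binPMF n j ((k:ℝ)/n) :=
        (sum_binPMF n _).symm
    _
      ≤ ∑ _j ∈ Finset.range (n+1), binPMF n k ((k:ℝ)/n) :=
        Finset.sum_le_sum fun j hj => t_le_max n k hkn j (by
          simp only [Finset.mem_range] at hj; omega)
    _ = ((n:ℝ)+1) * binPMF n k ((k:ℝ)/n) := by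
        rw [Finset.sum_const, Finset.card_range]; push_cast; ring

open Real

lemma key (n : ℕ) (p b : ℝ) (hp : 0 < p) (hp1 : p < 1) (hb0 : 0 ≤ b) (hbp : b ≤ p) :
    Real.exp (-((n:ℝ) * klN b p + 4 * Real.log ((n:ℝ)+1) + max 0 (Real.log (p/(1-p)))))
      ≤ binPMF n (⌊b * n⌋₊) p := by
  set M := max 0 (Real.log (p/(1-p))) with hM_def
  have hM : 0 ≤ M := le_max_left _ _
  have hq : 0 < 1 - p := by linarith
  rcases Nat.eq_zero_or_pos n with hn0 | hn
  · subst hn0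
    have hk : ⌊b * (0:ℕ)⌋₊ = 0 := by norm_num
    rw [hk]
    have : binPMF 0 0 p = 1 := by unfold binPMF; norm_num
    rw [this]
    apply Real.exp_le_one_iff.mpr
    simp only [Nat.cast_zero, zero_mul, Real.log_one]
    norm_num [hM_def]
  have hnR : (0:ℝ) < n := by exact_mod_cast hn
  set k := ⌊b * n⌋₊ with hk_def
  have hk_le : (k:ℝ) ≤ b * n := Nat.floor_le (by positivity)
  have hk_lt : b * n < (k:ℝ) + 1 := Nat.lt_floor_add_one _
  have hkn : k < n := by
    have : (k:ℝ) < n := by nlinarith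
    exact_mod_cast this
  have hLn1 : 0 ≤ Real.log ((n:ℝ)+1) := Real.log_nonneg (by norm_num)
  rcases Nat.eq_zero_or_pos k with hk0 | hk1
  -- case k = 0
  · rw [hk0]
    have hpmf : binPMF n 0 p = (1-p)^n := by unfold binPMF; norm_num
    rw [hpmf]
    have h1 : (1-p)^n = Real.exp ((n:ℝ) * Real.log (1-p)) := by
      rw [Real.exp_nat_mul, Real.exp_log hq]
    rw [h1, Real.exp_le_exp]
    -- need : -(n klN b p + 4 L(n+1) + M) ≤ n * L(1-p)
    rcases eq_or_lt_of_le hb0 with hb | hb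
    · -- b = 0
      have : klN b p = - Real.log (1-p) := by
        rw [← hb]; unfold klN
        norm_num [Real.log_div one_ne_zero (ne_of_gt hq)]
      rw [this]
      linarith
    · -- 0 < b
      have hb1 : b < 1 := lt_of_le_of_lt hbp hp1
      have h1b : 0 < 1 - b := by linarith
      have ht0 : 0 < (n:ℝ) * b := by positivity
      have ht1 : (n:ℝ) * b < 1 := by
        have : (k:ℝ) = 0 := by exact_mod_cast hk0
        nlinarith
      have hexp : klN b p = b * Real.log b - b * Real.log p
          + (1-b) * Real.log (1-b) - (1-b) * Real.log (1-p) := by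
        unfold klN
        rw [Real.log_div (ne_of_gt hb) (ne_of_gt hp),
            Real.log_div (ne_of_gt h1b) (ne_of_gt hq)]
        ring
      have hA : (n:ℝ) * b * (Real.log p - Real.log (1-p)) ≤ M := by
        have hpq : Real.log p - Real.log (1-p) = Real.log (p/(1-p)) := by
          rw [Real.log_div (ne_of_gt hp) (ne_of_gt hq)]
        rw [hpq]
        rcases le_or_gt 0 (Real.log (p/(1-p))) with h | h
        · calc (n:ℝ) * b * Real.log (p/(1-p)) ≤ 1 * Real.log (p/(1-p)) := by nlinarith
            _ ≤ M := by rw [one_mul]; exact le_max_right _ _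
        · nlinarith
      have hB : -((n:ℝ) * b * Real.log b) ≤ Real.log n + 1 := by
        have hlogb : Real.log b = Real.log ((n:ℝ)*b) - Real.log n := by
          rw [Real.log_mul (ne_of_gt hnR) (ne_of_gt hb)]; ring
        have hLn : 0 ≤ Real.log (n:ℝ) := Real.log_nonneg (by exact_mod_cast hn)
        have hlt : Real.log (1/((n:ℝ)*b)) ≤ 1/((n:ℝ)*b) - 1 :=
          Real.log_le_sub_one_of_pos (by positivity)
        rw [Real.log_div (by norm_num) (ne_of_gt ht0), Real.log_one] at hlt
        -- hlt : -log(nb) ≤ 1/(nb) - 1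
        have h2 : -((n:ℝ)*b * Real.log ((n:ℝ)*b)) ≤ 1 := by
          have h2a := mul_le_mul_of_nonneg_left hlt (le_of_lt ht0)
          have h3 : (n:ℝ)*b * (1/((n:ℝ)*b) - 1) = 1 - (n:ℝ)*b := by
            field_simp
          rw [h3] at h2a
          linarith
        have h8 : (n:ℝ)*b*Real.log n ≤ Real.log n := by nlinarith
        rw [hlogb]
        linarith
      have hC : -((n:ℝ) * (1-b) * Real.log (1-b)) ≤ 1 := by
        have hlt : Real.log (1/(1-b)) ≤ 1/(1-b) - 1 :=
          Real.log_le_sub_one_of_pos (by positivity)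
        rw [Real.log_div (by norm_num) (ne_of_gt h1b), Real.log_one] at hlt
        have h2a := mul_le_mul_of_nonneg_left hlt (le_of_lt h1b)
        have h3 : (1-b) * (1/(1-b) - 1) = b := by field_simp; ring
        rw [h3] at h2a
        have h6 := mul_le_mul_of_nonneg_left h2a (le_of_lt hnR)
        linarith
      have h4 : Real.log n + 2 ≤ 4 * Real.log ((n:ℝ)+1) := by
        have h5 : Real.log (n:ℝ) ≤ Real.log ((n:ℝ)+1) :=
          Real.log_le_log hnR (by linarith)
        have h6 : Real.log 2 ≤ Real.log ((n:ℝ)+1) := by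
          apply Real.log_le_log (by norm_num)
          have : (1:ℝ) ≤ n := by exact_mod_cast hn
          linarith
        have h7 : (0.6931471803 : ℝ) < Real.log 2 := Real.log_two_gt_d9
        linarith
      rw [hexp]
      linarith
  -- case 1 ≤ k
  · have hn2 : 2 ≤ n := by omega
    have hkR : (1:ℝ) ≤ k := by exact_mod_cast hk1
    have hknR : (k:ℝ) < n := by exact_mod_cast hkn
    obtain ⟨a, ha_def⟩ : ∃ x : ℝ, x = (k:ℝ)/n := ⟨_, rfl⟩
    have ha0 : 0 < a := by rw [ha_def]; positivity
    have ha1 : a < 1 := by rw [ha_def, div_lt_one hnR]; exact hknR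
    have hna : (n:ℝ) * a = k := by rw [ha_def]; field_simp
    have hab : a ≤ b := by rw [ha_def, div_le_iff₀ hnR]; linarith
    have hb_pos : 0 < b := lt_of_lt_of_le ha0 hab
    have hb1 : b < 1 := lt_of_le_of_lt hbp hp1
    have h1b : 0 < 1 - b := by linarith
    have h1a : 0 < 1 - a := by linarith
    have hC_pos : 0 < ((n.choose k : ℕ) : ℝ) := by
      exact_mod_cast Nat.choose_pos hkn.le
    have hs_pos : 0 < binPMF n k p := by
      unfold binPMF
      exact mul_pos (mul_pos hC_pos (pow_pos hp k)) (pow_pos hq _)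
    rw [← Real.le_log_iff_exp_le hs_pos]
    have hnk : ((n - k : ℕ) : ℝ) = (n:ℝ) - k := by
      rw [Nat.cast_sub hkn.le]
    have hlog_s : Real.log (binPMF n k p)
        = Real.log (n.choose k) + (k:ℝ) * Real.log p + ((n:ℝ)-(k:ℝ)) * Real.log (1-p) := by
      unfold binPMF
      rw [Real.log_mul (by positivity) (by positivity),
          Real.log_mul (by positivity) (by positivity),
          Real.log_pow, Real.log_pow, hnk]
    have htk_pos : 0 < binPMF n k a := by
      unfold binPMF
      exact mul_pos (mul_pos hC_pos (pow_pos ha0 k)) (pow_pos h1a _)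
    have hmax := one_le_max_term n k hkn.le
    rw [← ha_def] at hmax
    have hlogmax : 0 ≤ Real.log (((n:ℝ)+1) * binPMF n k a) := Real.log_nonneg hmax
    have hlogmax2 : 0 ≤ Real.log ((n:ℝ)+1) + (Real.log (n.choose k)
        + (k:ℝ) * Real.log a + ((n:ℝ)-(k:ℝ)) * Real.log (1-a)) := by
      have e2 : Real.log (binPMF n k a) = Real.log (n.choose k)
          + (k:ℝ) * Real.log a + ((n:ℝ)-(k:ℝ)) * Real.log (1-a) := by
        unfold binPMF
        rw [Real.log_mul (by positivity) (by positivity),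
            Real.log_mul (by positivity) (by positivity),
            Real.log_pow, Real.log_pow, hnk]
      have e : Real.log (((n:ℝ)+1) * binPMF n k a)
          = Real.log ((n:ℝ)+1) + (Real.log (n.choose k)
            + (k:ℝ) * Real.log a + ((n:ℝ)-(k:ℝ)) * Real.log (1-a)) := by
        rw [Real.log_mul (by positivity) (ne_of_gt htk_pos), e2]
      rw [e] at hlogmax
      exact hlogmax
    -- arithmetic facts
    have hx0 : 0 ≤ (n:ℝ)*b - k := by linarith
    have hx1 : (n:ℝ)*b - k ≤ 1 := by linarith
    have hexp : klN b p = b * Real.log b - b * Real.log p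
        + (1-b) * Real.log (1-b) - (1-b) * Real.log (1-p) := by
      unfold klN
      rw [Real.log_div (ne_of_gt hb_pos) (ne_of_gt hp),
          Real.log_div (ne_of_gt h1b) (ne_of_gt hq)]
      ring
    have hT3 : ((n:ℝ)*b - k) * (Real.log p - Real.log (1-p)) ≤ M := by
      have hpq : Real.log p - Real.log (1-p) = Real.log (p/(1-p)) := by
        rw [Real.log_div (ne_of_gt hp) (ne_of_gt hq)]
      rw [hpq]
      rcases le_or_gt 0 (Real.log (p/(1-p))) with h | h
      · have h9 := mul_le_mul_of_nonneg_right hx1 h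
        have h10 : Real.log (p/(1-p)) ≤ M := le_max_right _ _
        linarith
      · have h9 := mul_nonpos_of_nonneg_of_nonpos hx0 h.le
        linarith
    have hT1 : (k:ℝ) * Real.log a - ((n:ℝ)*b) * Real.log b ≤ Real.log n := by
      have hLab : Real.log a ≤ Real.log b := Real.log_le_log ha0 hab
      have hLa0 : Real.log a ≤ 0 := Real.log_nonpos ha0.le ha1.le
      have hLan : -Real.log a ≤ Real.log n := by
        have : Real.log a = Real.log k - Real.log n := by
          rw [ha_def, Real.log_div (by positivity) (ne_of_gt hnR)]
        have hLk : 0 ≤ Real.log (k:ℝ) := Real.log_nonneg hkR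
        linarith
      have p1 : ((n:ℝ)*b) * Real.log a ≤ ((n:ℝ)*b) * Real.log b :=
        mul_le_mul_of_nonneg_left hLab (by positivity)
      have p2 : ((n:ℝ)*b - k) * (-Real.log a) ≤ 1 * (-Real.log a) :=
        mul_le_mul_of_nonneg_right hx1 (by linarith)
      linarith
    have hT2 : ((n:ℝ)-(k:ℝ)) * Real.log (1-a) - ((n:ℝ)*(1-b)) * Real.log (1-b) ≤ 1 := by
      have hlt : Real.log ((1-a)/(1-b)) ≤ (1-a)/(1-b) - 1 :=
        Real.log_le_sub_one_of_pos (by positivity)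
      rw [Real.log_div (ne_of_gt h1a) (ne_of_gt h1b)] at hlt
      have he : (1-a)/(1-b) - 1 = (b-a)/(1-b) := by
        rw [div_sub_one (ne_of_gt h1b)]
        ring_nf
      rw [he] at hlt
      have p3 : ((n:ℝ)*(1-b)) * (Real.log (1-a) - Real.log (1-b))
          ≤ ((n:ℝ)*(1-b)) * ((b-a)/(1-b)) :=
        mul_le_mul_of_nonneg_left hlt (by positivity)
      have hc : (1-b) * ((b-a)/(1-b)) = b - a := by
        rw [mul_comm]; exact div_mul_cancel₀ _ (ne_of_gt h1b)
      have he2 : ((n:ℝ)*(1-b)) * ((b-a)/(1-b)) = (n:ℝ)*b - k := by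
        calc ((n:ℝ)*(1-b)) * ((b-a)/(1-b)) = (n:ℝ) * ((1-b) * ((b-a)/(1-b))) := by ring
          _ = (n:ℝ) * (b-a) := by rw [hc]
          _ = (n:ℝ)*b - k := by rw [mul_sub, hna]
      rw [he2] at p3
      have hL1a0 : Real.log (1-a) ≤ 0 := Real.log_nonpos h1a.le (by linarith)
      have p4 : ((n:ℝ)*b - k) * Real.log (1-a) ≤ 0 :=
        mul_nonpos_of_nonneg_of_nonpos hx0 hL1a0
      linarith [p3, p4, hx1]
    have h3 : Real.log n + 1 ≤ 3 * Real.log ((n:ℝ)+1) := by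
      have h5 : Real.log (n:ℝ) ≤ Real.log ((n:ℝ)+1) :=
        Real.log_le_log hnR (by linarith)
      have h6 : (1:ℝ) ≤ Real.log ((n:ℝ)+1) := by
        have h7 : Real.exp 1 ≤ 3 := le_of_lt (lt_trans Real.exp_one_lt_d9 (by norm_num))
        have h8 : (3:ℝ) ≤ (n:ℝ)+1 := by
          have : (2:ℝ) ≤ n := by exact_mod_cast hn2
          linarith
        rw [Real.le_log_iff_exp_le (by linarith)]
        linarith
      linarith
    rw [hlog_s, hexp]
    linarith [hT1, hT2, hT3, h3, hlogmax2, hM, hLn1]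

lemma rpow_eq_exp (n : ℕ) (p b : ℝ) :
    (2 : ℝ) ^ (-(n : ℝ) * klB b p - 4 * Real.logb 2 ((n : ℝ) + 1)
        - max 0 (Real.logb 2 (p / (1 - p))))
      = Real.exp (-((n:ℝ) * klN b p + 4 * Real.log ((n:ℝ)+1)
          + max 0 (Real.log (p/(1-p))))) := by
  have h2 : (0:ℝ) < 2 := by norm_num
  have hl2 : (0:ℝ) < Real.log 2 := Real.log_pos (by norm_num)
  rw [Real.rpow_def_of_pos h2]
  congr 1
  have hklB : klB b p * Real.log 2 = klN b p := by
    unfold klB klN Real.logb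
    field_simp
  have hlogb : ∀ x : ℝ, Real.logb 2 x * Real.log 2 = Real.log x := by
    intro x; unfold Real.logb; field_simp
  have hmax : Real.log 2 * max 0 (Real.logb 2 (p/(1-p))) = max 0 (Real.log (p/(1-p))) := by
    rw [mul_max_of_nonneg _ _ hl2.le, mul_zero, mul_comm, hlogb]
  calc Real.log 2 * (-(n : ℝ) * klB b p - 4 * Real.logb 2 ((n : ℝ) + 1)
        - max 0 (Real.logb 2 (p / (1 - p))))
      = -((n:ℝ) * (klB b p * Real.log 2) + 4 * (Real.logb 2 ((n:ℝ)+1) * Real.log 2)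
          + Real.log 2 * max 0 (Real.logb 2 (p/(1-p)))) := by ring
    _ = _ := by rw [hklB, hlogb, hmax]

theorem min_binomial_lower_tail (r n : ℕ) (p b : ℝ)
    (hp : 0 < p) (hp1 : p < 1) (hb0 : 0 ≤ b) (hbp : b ≤ p)
    (Ω : Type*) [MeasurableSpace Ω] (μ : Measure Ω) [IsProbabilityMeasure μ]
    (X : Fin r → Ω → ℕ) (hXm : ∀ i, Measurable (X i))
    (hindep : iIndepFun X μ)
    (hmarg : ∀ i k, μ {ω | X i ω = k} = ENNReal.ofReal (binPMF n k p)) :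
    (μ {ω | ∀ i, b * n < (X i ω : ℝ)}).toReal
      ≤ Real.exp (-(r : ℝ) * (2 : ℝ) ^ (-(n : ℝ) * klB b p
          - 4 * Real.logb 2 ((n : ℝ) + 1) - max 0 (Real.logb 2 (p / (1 - p))))) := by
  set k := ⌊b * (n:ℝ)⌋₊ with hk_def
  set s := binPMF n k p with hs_def
  have hq : 0 < 1 - p := by linarith
  have hs0 : 0 ≤ s := by
    rw [hs_def]; unfold binPMF; positivity
  rcases Nat.eq_zero_or_pos r with hr0 | hr
  · -- r = 0 : both sides are 1
    subst hr0
    have h1 : {ω : Ω | ∀ i : Fin 0, b * n < ((X i ω : ℕ) : ℝ)} = Set.univ := by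
      ext ω; simp
    rw [h1, measure_univ, ENNReal.toReal_one]
    rw [Nat.cast_zero, neg_zero, zero_mul, Real.exp_zero]
  have hs1 : s ≤ 1 := by
    have i0 : Fin r := ⟨0, hr⟩
    have := hmarg i0 k
    have hle : μ {ω | X i0 ω = k} ≤ 1 := prob_le_one
    rw [this] at hle
    exact ENNReal.ofReal_le_one.mp hle
  -- rewrite the event
  have hev : {ω : Ω | ∀ i, b * n < ((X i ω : ℕ) : ℝ)}
      = ⋂ i ∈ Finset.univ, X i ⁻¹' {m : ℕ | k < m} := by
    ext ω
    simp only [Set.mem_setOf_eq, Set.mem_iInter, Set.mem_preimage, Finset.mem_univ,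
      Set.mem_setOf_eq, forall_true_left]
    constructor
    · intro h i
      have h1 := h i
      have h2 : (k:ℝ) ≤ b * n := Nat.floor_le (by positivity)
      have : (k:ℝ) < (X i ω : ℝ) := lt_of_le_of_lt h2 h1
      exact_mod_cast this
    · intro h i
      have h1 := h i
      have h2 : b * n < (k:ℝ) + 1 := Nat.lt_floor_add_one _
      have h3 : (k:ℝ) + 1 ≤ (X i ω : ℝ) := by exact_mod_cast h1
      linarith
  have hprod : μ {ω : Ω | ∀ i, b * n < ((X i ω : ℕ) : ℝ)}
      = ∏ i : Fin r, μ (X i ⁻¹' {m : ℕ | k < m}) := by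
    rw [hev]
    exact hindep.measure_inter_preimage_eq_mul Finset.univ
      (fun i _ => MeasurableSet.of_discrete)
  have hfac : ∀ i : Fin r, μ (X i ⁻¹' {m : ℕ | k < m}) ≤ 1 - ENNReal.ofReal s := by
    intro i
    have hBmeas : MeasurableSet {ω | X i ω = k} := by
      have : {ω | X i ω = k} = X i ⁻¹' {k} := rfl
      rw [this]
      exact (hXm i) MeasurableSet.of_discrete
    have hsub : X i ⁻¹' {m : ℕ | k < m} ⊆ {ω | X i ω = k}ᶜ := by
      intro ω hω
      simp only [Set.mem_preimage, Set.mem_setOf_eq] at hω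
      simp only [Set.mem_compl_iff, Set.mem_setOf_eq]
      omega
    calc μ (X i ⁻¹' {m : ℕ | k < m}) ≤ μ ({ω | X i ω = k}ᶜ) := measure_mono hsub
      _ = 1 - μ {ω | X i ω = k} := prob_compl_eq_one_sub hBmeas
      _ = 1 - ENNReal.ofReal s := by rw [hmarg i k]
  have hbound : μ {ω : Ω | ∀ i, b * n < ((X i ω : ℕ) : ℝ)} ≤ (1 - ENNReal.ofReal s)^r := by
    rw [hprod]
    calc ∏ i : Fin r, μ (X i ⁻¹' {m : ℕ | k < m})
        ≤ ∏ _i : Fin r, (1 - ENNReal.ofReal s) :=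
          Finset.prod_le_prod' fun i _ => hfac i
      _ = (1 - ENNReal.ofReal s)^r := by
          rw [Finset.prod_const, Finset.card_univ, Fintype.card_fin]
  have htoReal : ((1 - ENNReal.ofReal s)^r).toReal = (1 - s)^r := by
    rw [ENNReal.toReal_pow, ENNReal.toReal_sub_of_le (ENNReal.ofReal_le_one.mpr hs1) ENNReal.one_ne_top,
      ENNReal.toReal_one, ENNReal.toReal_ofReal hs0]
  have hmain : (μ {ω : Ω | ∀ i, b * n < ((X i ω : ℕ) : ℝ)}).toReal ≤ (1 - s)^r := by
    rw [← htoReal]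
    apply ENNReal.toReal_mono _ hbound
    exact ENNReal.pow_ne_top (by
      exact ne_top_of_le_ne_top ENNReal.one_ne_top tsub_le_self)
  refine le_trans hmain ?_
  -- (1-s)^r ≤ exp(-(r*s)) ≤ exp(-r * 2^E)
  have h1s : 1 - s ≤ Real.exp (-s) := by
    have := Real.add_one_le_exp (-s)
    linarith
  have h2 : (1 - s)^r ≤ Real.exp (-s)^r := by
    apply pow_le_pow_left₀ (by linarith) h1s
  have h3 : Real.exp (-s)^r = Real.exp (-((r:ℝ) * s)) := by
    rw [← Real.exp_nat_mul]; ring_nf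
  have hkey : (2 : ℝ) ^ (-(n : ℝ) * klB b p - 4 * Real.logb 2 ((n : ℝ) + 1)
      - max 0 (Real.logb 2 (p / (1 - p)))) ≤ s := by
    rw [rpow_eq_exp]
    rw [hs_def, hk_def]
    exact key n p b hp hp1 hb0 hbp
  calc (1 - s)^r ≤ Real.exp (-((r:ℝ) * s)) := by rw [← h3]; exact h2
    _ ≤ Real.exp (-(r : ℝ) * (2 : ℝ) ^ (-(n : ℝ) * klB b p
          - 4 * Real.logb 2 ((n : ℝ) + 1) - max 0 (Real.logb 2 (p / (1 - p))))) := by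
        rw [Real.exp_le_exp]
        have hr0 : (0:ℝ) ≤ r := by positivity
        nlinarith [hkey, hr0]
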